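/- arXiv:2507.17642 — 4 statements merged into one kernel-verified Lean document; each statement's English description precedes it below -/
import Mathlib

section
/- Let R ⊆ K[[t]] be a complete K-subalgebra with value semigroup Γ of finite complement in ℕ, and let H = ℕ \ Γ. For every n ∈ Γ there exists a unique element τ_n ∈ R of the form τ_n = t^n + Σ_{i ∈ H, i > n} c_i t^i with c_i ∈ K. -/
/-- The `t`-adic valuation of a formal power series. -/
noncomputable def valt {K : Type*} [Semiring K] (f : PowerSeries K) : ℕ :=
  sInf {n | PowerSeries.coeff n f ≠ 0}

open PowerSeries

lemma valt_coeff_ne_zero {K : Type*} [Semiring K] {f : PowerSeries K} (hf : f ≠ 0) :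
    coeff (valt f) f ≠ 0 := by
  have hne : {n | coeff n f ≠ 0}.Nonempty := by
    by_contra h
    rw [Set.not_nonempty_iff_eq_empty] at h
    apply hf
    ext m
    have := Set.eq_empty_iff_forall_notMem.mp h m
    simpa using this
  exact Nat.sInf_mem hne

lemma valt_coeff_lt {K : Type*} [Semiring K] {f : PowerSeries K} {m : ℕ}
    (hm : m < valt f) : coeff m f = 0 := by
  by_contra h
  exact absurd (Nat.sInf_le h) (not_le.mpr hm)

/-- Normalized element of a given valuation. -/
lemma exists_norm {K : Type*} [Field K] (R : Subalgebra K (PowerSeries K)) (Γ : Set ℕ)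
    (hΓ : Γ = {n | ∃ g ∈ R, g ≠ 0 ∧ valt g = n}) {m : ℕ} (hm : m ∈ Γ) :
    ∃ h ∈ R, coeff m h = 1 ∧ ∀ i < m, coeff i h = 0 := by
  rw [hΓ] at hm
  obtain ⟨g, hgR, hg0, hval⟩ := hm
  have hc : coeff m g ≠ 0 := by rw [← hval]; exact valt_coeff_ne_zero hg0
  refine ⟨(coeff m g)⁻¹ • g, R.smul_mem hgR _, ?_, ?_⟩
  · rw [map_smul, smul_eq_mul, inv_mul_cancel₀ hc]
  · intro i hi
    have hz : coeff i g = 0 := valt_coeff_lt (by rw [hval]; exact hi)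
    rw [map_smul, smul_eq_mul, hz, mul_zero]

/-- In a subalgebra `R ⊆ K[[t]]` closed in the `t`-adic topology with value semigroup `Γ`
of finite complement `H`, every `n ∈ Γ` is the valuation of a unique element of the form
`τ_n = t^n + Σ_{i ∈ H, i > n} c_i t^i`. -/
theorem stmt6 {K : Type*} [Field K] (R : Subalgebra K (PowerSeries K))
    (hclosed : ∀ f : PowerSeries K,
      (∀ n : ℕ, ∃ g ∈ R, ∀ m ≤ n, PowerSeries.coeff m g = PowerSeries.coeff m f) →
        f ∈ R)
    (Γ : Set ℕ) (hΓ : Γ = {n | ∃ g ∈ R, g ≠ 0 ∧ valt g = n})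
    (hfin : (Γᶜ : Set ℕ).Finite) (n : ℕ) (hn : n ∈ Γ) :
    ∃! τ : PowerSeries K, τ ∈ R ∧ PowerSeries.coeff n τ = 1 ∧
      ∀ i : ℕ, i ≠ n → PowerSeries.coeff i τ ≠ 0 → i ∈ (Γᶜ : Set ℕ) ∧ n < i := by
  classical
  -- normalized generators
  choose nor hnorR hnor1 hnor0 using
    fun m (hm : m ∈ Γ) => exists_norm R Γ hΓ hm
  -- the approximating sequence
  set f : ℕ → PowerSeries K := fun k =>
    Nat.rec (nor n hn)
      (fun k fk =>
        if h : n + k + 1 ∈ Γ then fk - (coeff (n + k + 1) fk) • nor (n + k + 1) h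
        else fk) k with hfdef
  have hfs : ∀ k, f (k + 1) =
      if h : n + k + 1 ∈ Γ then f k - (coeff (n + k + 1) (f k)) • nor (n + k + 1) h
      else f k := fun k => rfl
  have hf0 : f 0 = nor n hn := rfl
  have hmem : ∀ k, f k ∈ R := by
    intro k
    induction k with
    | zero => exact hnorR n hn
    | succ k ih =>
      rw [hfs]
      split
      · exact R.sub_mem ih (R.smul_mem (hnorR _ _) _)
      · exact ih
  -- one step does not change coefficients up to n + k
  have hstep : ∀ k i, i ≤ n + k → coeff i (f (k + 1)) = coeff i (f k) := by
    intro k i hi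
    rw [hfs]
    split
    · rw [map_sub, map_smul, smul_eq_mul,
        hnor0 _ ‹_› i (by omega), mul_zero, sub_zero]
    · rfl
  -- stability
  have hstab : ∀ k k', k ≤ k' → ∀ i ≤ n + k, coeff i (f k') = coeff i (f k) := by
    intro k k' hk
    induction k' with
    | zero =>
      intro i hi
      have : k = 0 := Nat.le_zero.mp hk
      rw [this]
    | succ k' ih =>
      intro i hi
      rcases Nat.lt_or_ge k (k' + 1) with h | h
      · have hk' : k ≤ k' := Nat.lt_succ_iff.mp h
        rw [hstep k' i (by omega), ih hk' i hi]
      · have : k = k' + 1 := le_antisymm hk h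
        rw [this]
  -- coefficients in Γ above n are killed
  have hgam : ∀ k i, n < i → i ≤ n + k → i ∈ Γ → coeff i (f k) = 0 := by
    intro k
    induction k with
    | zero => intro i h1 h2 _; omega
    | succ k ih =>
      intro i h1 h2 hiΓ
      rcases Nat.lt_or_ge i (n + k + 1) with h | h
      · rw [hstep k i (by omega)]
        exact ih i h1 (by omega) hiΓ
      · have hieq : i = n + k + 1 := by omega
        subst hieq
        rw [hfs, dif_pos hiΓ, map_sub, map_smul, smul_eq_mul, hnor1, mul_one, sub_self]
  -- the limit
  set τ : PowerSeries K := PowerSeries.mk (fun i => coeff i (f i)) with hτdef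
  have hcoe : ∀ i k, i ≤ k → coeff i τ = coeff i (f k) := by
    intro i k hik
    rw [hτdef, coeff_mk]
    exact (hstab i k hik i (by omega)).symm
  have hτR : τ ∈ R := by
    apply hclosed
    intro N
    exact ⟨f N, hmem N, fun m hm => (hcoe m N hm).symm⟩
  have hτ1 : coeff n τ = 1 := by
    rw [hcoe n n le_rfl, hstab 0 n (Nat.zero_le _) n (by omega), hf0, hnor1]
  have hτH : ∀ i : ℕ, i ≠ n → coeff i τ ≠ 0 → i ∈ (Γᶜ : Set ℕ) ∧ n < i := by
    intro i hin hi0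
    have hni : n < i := by
      by_contra h
      have hlt : i < n := by omega
      apply hi0
      rw [hcoe i i le_rfl, hstab 0 i (Nat.zero_le _) i (by omega), hf0]
      exact hnor0 n hn i hlt
    refine ⟨?_, hni⟩
    intro hiΓ
    apply hi0
    rw [hcoe i i le_rfl, hstab (i - n) i (Nat.sub_le _ _) i (by omega)]
    exact hgam (i - n) i hni (by omega) hiΓ
  refine ⟨τ, ⟨hτR, hτ1, hτH⟩, ?_⟩
  -- uniqueness
  intro τ' ⟨hτ'R, hτ'1, hτ'H⟩
  by_contra hne
  have hd0 : τ' - τ ≠ 0 := sub_ne_zero.mpr hne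
  have hdR : τ' - τ ∈ R := R.sub_mem hτ'R hτR
  have hvΓ : valt (τ' - τ) ∈ Γ := by
    rw [hΓ]; exact ⟨τ' - τ, hdR, hd0, rfl⟩
  set v := valt (τ' - τ) with hv
  have hvc : coeff v (τ' - τ) ≠ 0 := valt_coeff_ne_zero hd0
  have hvn : v ≠ n := by
    intro h
    apply hvc
    rw [h, map_sub, hτ'1, hτ1, sub_self]
  rw [map_sub] at hvc
  have : coeff v τ' ≠ 0 ∨ coeff v τ ≠ 0 := by
    by_contra h
    push_neg at h
    rw [h.1, h.2, sub_self] at hvc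
    exact hvc rfl
  rcases this with h | h
  · exact (hτ'H v hvn h).1 hvΓ
  · exact (hτH v hvn h).1 hvΓ
end

section
/- Let R ⊆ K[[t]] be a K-subalgebra with value semigroup Γ of finite complement in ℕ and let I ⊆ R be a nonzero ideal of colength n generated by g_1, …, g_k with valuations n_1 ≤ … ≤ n_k forming an independent k-tuple (n_i ∉ val_t of the ideal generated by the other g_j's). If g'_1, …, g'_k is another minimal generating set of I whose valuations n'_1 ≤ … ≤ n'_k also form an independent k-tuple, then n_i = n'_i for all i. -/
/-- The set of valuations attained by nonzero elements of an ideal `J ⊆ R ⊆ K[[t]]`. -/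
noncomputable def idealVals {K : Type*} [Field K] {R : Subalgebra K (PowerSeries K)}
    (J : Ideal R) : Set ℕ :=
  {n | ∃ g : R, g ∈ J ∧ (g : PowerSeries K) ≠ 0 ∧ valt (g : PowerSeries K) = n}

set_option maxHeartbeats 1000000
set_option synthInstance.maxHeartbeats 1000000

namespace Stmt10Aux
open PowerSeries
variable {K : Type*} [Field K]

lemma valt_order {f : PowerSeries K} (hf : f ≠ 0) : f.order = (valt f : ℕ∞) := by
  have hne : {n | PowerSeries.coeff n f ≠ 0}.Nonempty := by
    by_contra h
    rw [Set.not_nonempty_iff_eq_empty] at h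
    apply hf
    ext n
    have : n ∉ {n | PowerSeries.coeff n f ≠ 0} := by simp [h]
    simpa using this
  have h1 : PowerSeries.coeff (valt f) f ≠ 0 := Nat.sInf_mem hne
  have h2 : ∀ m < valt f, PowerSeries.coeff m f = 0 := fun m hm => by
    by_contra hc
    exact Nat.notMem_of_lt_sInf hm hc
  exact order_eq_nat.2 ⟨h1, fun i hi => h2 i hi⟩

lemma valt_of_order {f : PowerSeries K} {n : ℕ} (h : f.order = n) : valt f = n := by
  have hf : f ≠ 0 := by
    rintro rfl
    simp [PowerSeries.order_zero] at h
  rw [valt_order hf] at h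
  exact_mod_cast h

lemma coeff_valt {f : PowerSeries K} (hf : f ≠ 0) :
    PowerSeries.coeff (valt f) f ≠ 0 :=
  (order_eq_nat.1 (valt_order hf)).1

lemma coeff_lt_valt {f : PowerSeries K} (hf : f ≠ 0) {m : ℕ} (hm : m < valt f) :
    PowerSeries.coeff m f = 0 :=
  (order_eq_nat.1 (valt_order hf)).2 m hm

lemma valt_eq_of_coeff {f : PowerSeries K} {n : ℕ}
    (h1 : PowerSeries.coeff n f ≠ 0) (h2 : ∀ m < n, PowerSeries.coeff m f = 0) :
    valt f = n :=
  valt_of_order (order_eq_nat.2 ⟨h1, h2⟩)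

lemma valt_mul {f g : PowerSeries K} (hf : f ≠ 0) (hg : g ≠ 0) :
    valt (f * g) = valt f + valt g := by
  apply valt_of_order
  rw [PowerSeries.order_mul, valt_order hf, valt_order hg, ← Nat.cast_add]

lemma valt_zero_eq : valt (0 : PowerSeries K) = 0 := by
  simp [valt, Nat.sInf_empty]

lemma valt_neg (f : PowerSeries K) : valt (-f) = valt f := by
  simp [valt]

lemma valt_add_right {f g : PowerSeries K} (hf : f ≠ 0) (h : g = 0 ∨ valt f < valt g) :
    f + g ≠ 0 ∧ valt (f + g) = valt f := by
  rcases h with rfl | hlt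
  · simpa using hf
  · have hg : g ≠ 0 := by
      rintro rfl
      rw [valt_zero_eq] at hlt
      omega
    have hord : f.order ≠ g.order := by
      rw [valt_order hf, valt_order hg]
      exact_mod_cast hlt.ne
    have h2 := PowerSeries.order_add_of_order_ne f g hord
    have hmin : f.order ⊓ g.order = f.order := by
      apply min_eq_left
      rw [valt_order hf, valt_order hg]
      exact_mod_cast hlt.le
    have hne : f + g ≠ 0 := by
      intro h0
      rw [h0, PowerSeries.order_zero, hmin, valt_order hf] at h2
      exact (ENat.coe_ne_top _) h2.symm
    exact ⟨hne, valt_of_order (by rw [h2, hmin, valt_order hf])⟩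

/-- The ideal of elements of `R` with zero constant term. -/
noncomputable def mId (R : Subalgebra K (PowerSeries K)) : Ideal R :=
  RingHom.ker ((PowerSeries.constantCoeff (R := K)).comp (R.val : R →+* PowerSeries K))

lemma mem_mId {R : Subalgebra K (PowerSeries K)} {x : R} :
    x ∈ mId R ↔ PowerSeries.constantCoeff (x : PowerSeries K) = 0 := by
  simp [mId, RingHom.mem_ker]

lemma one_le_valt_of_mem {R : Subalgebra K (PowerSeries K)} {x : R} (hx : x ∈ mId R)
    (h0 : (x : PowerSeries K) ≠ 0) : 1 ≤ valt (x : PowerSeries K) := by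
  by_contra h
  push_neg at h
  interval_cases hv : valt (x : PowerSeries K)
  have := coeff_valt h0
  rw [hv, PowerSeries.coeff_zero_eq_constantCoeff, mem_mId.1 hx] at this
  exact this rfl

lemma valt_inj {R : Subalgebra K (PowerSeries K)} {k : ℕ} {g : Fin k → R}
    (hg0 : ∀ i, (g i : PowerSeries K) ≠ 0)
    (hind : ∀ i, valt (g i : PowerSeries K) ∉
      idealVals (Ideal.span {x : R | ∃ j, j ≠ i ∧ g j = x})) :
    Function.Injective fun i => valt (g i : PowerSeries K) := by
  intro i j hij
  by_contra hne
  exact hind i ⟨g j, Ideal.subset_span ⟨j, fun h => hne h.symm, rfl⟩, hg0 j, hij.symm⟩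

lemma key {R : Subalgebra K (PowerSeries K)} {k : ℕ} {I : Ideal R} {g : Fin k → R}
    (hgI : Ideal.span (Set.range g) = I)
    (hg0 : ∀ i, (g i : PowerSeries K) ≠ 0)
    (hind : ∀ i, valt (g i : PowerSeries K) ∉
      idealVals (Ideal.span {x : R | ∃ j, j ≠ i ∧ g j = x})) :
    idealVals I \ idealVals (mId R * I) = Set.range fun i => valt (g i : PowerSeries K) := by
  classical
  have hinj := valt_inj hg0 hind
  -- representation of elements of `mId R * I`
  have hrep : ∀ h ∈ mId R * I, ∃ r : Fin k → R, (∀ j, r j ∈ mId R) ∧ h = ∑ j, r j * g j := by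
    intro h hh
    refine Submodule.mul_induction_on hh ?_ ?_
    · intro a ha b hb
      rw [← hgI, ← Ideal.submodule_span_eq, Submodule.mem_span_range_iff_exists_fun] at hb
      obtain ⟨c, hc⟩ := hb
      refine ⟨fun j => a * c j, fun j => (mId R).mul_mem_right (c j) ha, ?_⟩
      rw [← hc, Finset.mul_sum]
      exact Finset.sum_congr rfl fun j _ => by rw [smul_eq_mul, mul_assoc]
    · rintro x y ⟨r, hr, hx⟩ ⟨s, hs, hy⟩
      exact ⟨r + s, fun j => (mId R).add_mem (hr j) (hs j), by
        rw [hx, hy, ← Finset.sum_add_distrib]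
        exact Finset.sum_congr rfl fun j _ => by rw [Pi.add_apply, add_mul]⟩
  -- the valuations of the generators are not valuations of `mId R * I`
  have notm : ∀ i, valt (g i : PowerSeries K) ∉ idealVals (mId R * I) := by
    rintro i ⟨h, hmem, hne, hval⟩
    obtain ⟨r, hr, hrh⟩ := hrep h hmem
    set u : R := ∑ j ∈ Finset.univ.erase i, r j * g j with hu_def
    have humem : u ∈ Ideal.span {x : R | ∃ j, j ≠ i ∧ g j = x} := by
      refine Submodule.sum_mem _ fun j hj => ?_
      exact Ideal.mul_mem_left _ _
        (Ideal.subset_span ⟨j, (Finset.mem_erase.1 hj).1, rfl⟩)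
    have hsum : h = r i * g i + u := by
      rw [hrh, hu_def]
      exact (Finset.add_sum_erase Finset.univ _ (Finset.mem_univ i)).symm
    by_cases hri : (r i : PowerSeries K) = 0
    · have hri0 : r i = 0 := Subtype.ext hri
      rw [hri0, zero_mul, zero_add] at hsum
      exact hind i ⟨u, humem, hsum ▸ hne, hsum ▸ hval⟩
    · have hval_ri : 1 ≤ valt (r i : PowerSeries K) := one_le_valt_of_mem (hr i) hri
      have hprod : valt ((r i : PowerSeries K) * (g i : PowerSeries K))
          = valt (r i : PowerSeries K) + valt (g i : PowerSeries K) :=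
        valt_mul hri (hg0 i)
      have hprod0 : (r i : PowerSeries K) * (g i : PowerSeries K) ≠ 0 :=
        mul_ne_zero hri (hg0 i)
      have hcoe : (u : PowerSeries K)
          = (h : PowerSeries K) + -((r i : PowerSeries K) * (g i : PowerSeries K)) := by
        have : (h : PowerSeries K)
            = (r i : PowerSeries K) * (g i : PowerSeries K) + (u : PowerSeries K) := by
          rw [hsum]
          push_cast
          ring
        rw [this]
        ring
      have hlt : valt (h : PowerSeries K)
          < valt (-((r i : PowerSeries K) * (g i : PowerSeries K))) := by
        rw [valt_neg, hprod, hval]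
        omega
      obtain ⟨hu0, huval⟩ := valt_add_right hne (Or.inr hlt)
      rw [← hcoe] at hu0 huval
      exact hind i ⟨u, humem, hu0, huval.trans hval⟩
  ext n
  simp only [Set.mem_diff, Set.mem_range]
  constructor
  · rintro ⟨⟨h, hhI, hh0, hhval⟩, hnm⟩
    have hnm' : n ∉ idealVals (mId R * I) := hnm
    rw [← hgI, ← Ideal.submodule_span_eq, Submodule.mem_span_range_iff_exists_fun] at hhI
    obtain ⟨c, hc⟩ := hhI
    set κ : Fin k → K := fun j => PowerSeries.constantCoeff (c j : PowerSeries K) with hκ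
    set s' : R := ∑ j, algebraMap K R (κ j) * g j with hs'
    have halgcoe : ∀ x : K, ((algebraMap K R x : R) : PowerSeries K) = PowerSeries.C x := by
      intro x
      simp [PowerSeries.algebraMap_apply]
    have humem : h - s' ∈ mId R * I := by
      have heq : h - s' = ∑ j, (c j - algebraMap K R (κ j)) * g j := by
        rw [← hc, hs', ← Finset.sum_sub_distrib]
        exact Finset.sum_congr rfl fun j _ => by rw [smul_eq_mul, sub_mul]
      rw [heq]
      refine Submodule.sum_mem _ fun j _ => ?_
      refine Ideal.mul_mem_mul ?_ (hgI ▸ Ideal.subset_span (Set.mem_range_self j))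
      rw [mem_mId]
      push_cast
      simp [PowerSeries.algebraMap_apply, hκ]
    set T : Finset (Fin k) := Finset.univ.filter fun j => κ j ≠ 0 with hT
    have hs'T : s' = ∑ j ∈ T, algebraMap K R (κ j) * g j := by
      rw [hs', eq_comm, hT]
      refine Finset.sum_filter_of_ne fun j _ hj => ?_
      intro h0
      rw [h0, map_zero, zero_mul] at hj
      exact hj rfl
    rcases T.eq_empty_or_nonempty with hTe | hTne
    · exfalso
      apply hnm'
      have hs'0 : s' = 0 := by rw [hs'T, hTe, Finset.sum_empty]
      have : h - s' = h := by rw [hs'0, sub_zero]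
      exact ⟨h, this ▸ humem, hh0, hhval⟩
    · obtain ⟨j0, hj0T, hj0min⟩ :=
        T.exists_min_image (fun j => valt (g j : PowerSeries K)) hTne
      have hκj0 : κ j0 ≠ 0 := (Finset.mem_filter.1 hj0T).2
      -- compute the valuation of s'
      have hcoe_s' : (s' : PowerSeries K)
          = ∑ j ∈ T, PowerSeries.C (κ j) * (g j : PowerSeries K) := by
        rw [hs'T, AddSubmonoidClass.coe_finset_sum]
        exact Finset.sum_congr rfl fun j _ => by push_cast [halgcoe]; ring
      have hcoeff : ∀ m, PowerSeries.coeff m (s' : PowerSeries K)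
          = ∑ j ∈ T, κ j * PowerSeries.coeff m (g j : PowerSeries K) := by
        intro m
        rw [hcoe_s', map_sum]
        exact Finset.sum_congr rfl fun j _ => PowerSeries.coeff_C_mul _ _ _
      have h1 : PowerSeries.coeff (valt (g j0 : PowerSeries K)) (s' : PowerSeries K) ≠ 0 := by
        rw [hcoeff, Finset.sum_eq_single j0]
        · exact mul_ne_zero hκj0 (coeff_valt (hg0 j0))
        · intro j hjT hjne
          have hlt : valt (g j0 : PowerSeries K) < valt (g j : PowerSeries K) :=
            lt_of_le_of_ne (hj0min j hjT) fun h => hjne (hinj h.symm)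
          rw [coeff_lt_valt (hg0 j) hlt, mul_zero]
        · intro hj0; exact absurd hj0T hj0
      have h2 : ∀ m < valt (g j0 : PowerSeries K),
          PowerSeries.coeff m (s' : PowerSeries K) = 0 := by
        intro m hm
        rw [hcoeff]
        refine Finset.sum_eq_zero fun j hjT => ?_
        rw [coeff_lt_valt (hg0 j) (lt_of_lt_of_le hm (hj0min j hjT)), mul_zero]
      have hs'ne : (s' : PowerSeries K) ≠ 0 := fun h => h1 (by rw [h, map_zero])
      have hs'val : valt (s' : PowerSeries K) = valt (g j0 : PowerSeries K) :=
        valt_eq_of_coeff h1 h2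
      rcases lt_trichotomy n (valt (g j0 : PowerSeries K)) with hlt | heq | hgt
      · exfalso
        apply hnm'
        have hcoe : ((h - s' : R) : PowerSeries K)
            = (h : PowerSeries K) + -(s' : PowerSeries K) := by push_cast; ring
        have hlt' : valt (h : PowerSeries K) < valt (-(s' : PowerSeries K)) := by
          rw [valt_neg, hs'val, hhval]; exact hlt
        obtain ⟨hu0, huval⟩ := valt_add_right hh0 (Or.inr hlt')
        rw [← hcoe] at hu0 huval
        exact ⟨h - s', humem, hu0, huval.trans hhval⟩
      · exact ⟨j0, heq.symm⟩
      · exfalso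
        apply notm j0
        have hvmem : s' - h ∈ mId R * I := by
          have : s' - h = -(h - s') := by ring
          rw [this]
          exact Submodule.neg_mem _ humem
        have hcoe : ((s' - h : R) : PowerSeries K)
            = (s' : PowerSeries K) + -(h : PowerSeries K) := by push_cast; ring
        have hlt' : valt (s' : PowerSeries K) < valt (-(h : PowerSeries K)) := by
          rw [valt_neg, hs'val, hhval]; exact hgt
        obtain ⟨hu0, huval⟩ := valt_add_right hs'ne (Or.inr hlt')
        rw [← hcoe] at hu0 huval
        exact ⟨s' - h, hvmem, hu0, huval.trans hs'val⟩
  · rintro ⟨i, rfl⟩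
    exact ⟨⟨g i, hgI ▸ Ideal.subset_span (Set.mem_range_self i), hg0 i, rfl⟩, notm i⟩

end Stmt10Aux

/-- Uniqueness of the independent tuple of valuations: two minimal generating sets of the
same ideal whose (sorted) valuation tuples are both independent have the same valuations. -/
theorem stmt10 {K : Type*} [Field K] (R : Subalgebra K (PowerSeries K))
    (hfin : ({n | ∃ g ∈ R, g ≠ 0 ∧ valt g = n}ᶜ : Set ℕ).Finite)
    (k : ℕ) (I : Ideal R) (hI : I ≠ ⊥)
    (g g' : Fin k → R)
    (hgI : Ideal.span (Set.range g) = I) (hg'I : Ideal.span (Set.range g') = I)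
    (hg0 : ∀ i, (g i : PowerSeries K) ≠ 0) (hg'0 : ∀ i, (g' i : PowerSeries K) ≠ 0)
    (hmin : ∀ i, g i ∉ Ideal.span {x : R | ∃ j, j ≠ i ∧ g j = x})
    (hmin' : ∀ i, g' i ∉ Ideal.span {x : R | ∃ j, j ≠ i ∧ g' j = x})
    (hmono : Monotone fun i => valt (g i : PowerSeries K))
    (hmono' : Monotone fun i => valt (g' i : PowerSeries K))
    (hind : ∀ i, valt (g i : PowerSeries K) ∉
      idealVals (Ideal.span {x : R | ∃ j, j ≠ i ∧ g j = x}))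
    (hind' : ∀ i, valt (g' i : PowerSeries K) ∉
      idealVals (Ideal.span {x : R | ∃ j, j ≠ i ∧ g' j = x})) :
    ∀ i, valt (g i : PowerSeries K) = valt (g' i : PowerSeries K) := by
  classical
  have h1 := Stmt10Aux.key hgI hg0 hind
  have h2 := Stmt10Aux.key hg'I hg'0 hind'
  have hrange : (Set.range fun i => valt (g i : PowerSeries K))
      = Set.range fun i => valt (g' i : PowerSeries K) := by rw [← h1, ← h2]
  have hinj := Stmt10Aux.valt_inj hg0 hind
  have hinj' := Stmt10Aux.valt_inj hg'0 hind'
  have hsm : StrictMono fun i => valt (g i : PowerSeries K) :=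
    hmono.strictMono_of_injective hinj
  have hsm' : StrictMono fun i => valt (g' i : PowerSeries K) :=
    hmono'.strictMono_of_injective hinj'
  set s : Finset ℕ := Finset.image (fun i => valt (g i : PowerSeries K)) Finset.univ with hs
  have hcard : s.card = k := by
    rw [hs, Finset.card_image_of_injective _ hinj, Finset.card_univ, Fintype.card_fin]
  have hmem : ∀ i, valt (g i : PowerSeries K) ∈ s := fun i =>
    Finset.mem_image_of_mem _ (Finset.mem_univ i)
  have hmem' : ∀ i, valt (g' i : PowerSeries K) ∈ s := by
    intro i
    have : valt (g' i : PowerSeries K) ∈ Set.range fun i => valt (g i : PowerSeries K) := by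
      rw [hrange]; exact Set.mem_range_self i
    obtain ⟨j, hj⟩ := this
    exact hj ▸ hmem j
  have e1 := Finset.orderEmbOfFin_unique hcard hmem hsm
  have e2 := Finset.orderEmbOfFin_unique hcard hmem' hsm'
  intro i
  rw [show valt (g i : PowerSeries K) = (fun i => valt (g i : PowerSeries K)) i from rfl,
    show valt (g' i : PowerSeries K) = (fun i => valt (g' i : PowerSeries K)) i from rfl,
    e1, e2]
end

section
/- Let Γ = ⟨p, q⟩ be the numerical semigroup generated by coprime p, q ≥ 2, δ = |ℕ \ Γ|, and let n_1 ≤ … ≤ n_k be elements of Γ such that the union Γ_n = ⋃_i (n_i + Γ) is not covered by any proper subfamily (independence). Then |Γ \ Γ_n| = n_1 − δ + |ℕ \ ⋃_i ((n_i − n_1) + Γ)|. -/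
/-- Colength formula for the semigroup ideal generated by an independent tuple
`n_1 ≤ … ≤ n_k` in `Γ = ⟨p,q⟩`:
`|Γ \ Γ_n| = n_1 − δ + |ℕ \ ⋃_i ((n_i − n_1) + Γ)|`. -/
theorem stmt12 (p q : ℕ) (hp : 2 ≤ p) (hq : 2 ≤ q) (hpq : Nat.Coprime p q)
    (Γ : Set ℕ) (hΓ : Γ = {m | ∃ a b : ℕ, m = a * p + b * q})
    (δ : ℕ) (hδ : δ = (Γᶜ : Set ℕ).ncard)
    (k : ℕ) (hk : 0 < k) (n : Fin k → ℕ) (hnΓ : ∀ i, n i ∈ Γ)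
    (hmono : Monotone n)
    (Γn : Set ℕ) (hΓn : Γn = ⋃ i, (fun γ => n i + γ) '' Γ)
    (hind : ∀ i, ¬ Γn ⊆ ⋃ j ∈ {j : Fin k | j ≠ i}, (fun γ => n j + γ) '' Γ) :
    ((Γ \ Γn).ncard : ℤ)
      = (n ⟨0, hk⟩ : ℤ) - (δ : ℤ)
        + (((⋃ i, (fun γ => (n i - n ⟨0, hk⟩) + γ) '' Γ)ᶜ : Set ℕ).ncard : ℤ) := by
  set n0 := n ⟨0, hk⟩ with hn0
  set U : Set ℕ := ⋃ i, (fun γ => (n i - n0) + γ) '' Γ with hU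
  have hle : ∀ i, n0 ≤ n i := fun i => hmono (Fin.le_def.mpr (Nat.zero_le _))
  -- Γ is closed under addition and contains 0
  have hzero : (0 : ℕ) ∈ Γ := by rw [hΓ]; exact ⟨0, 0, by ring⟩
  have hadd : ∀ x ∈ Γ, ∀ y ∈ Γ, x + y ∈ Γ := by
    rw [hΓ]
    rintro x ⟨a, b, rfl⟩ y ⟨c, d, rfl⟩
    exact ⟨a + c, b + d, by ring⟩
  -- Γᶜ is finite (Chicken McNugget)
  have hΓclos : Γ = (AddSubmonoid.closure {p, q} : Set ℕ) := by
    ext x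
    rw [SetLike.mem_coe, AddSubmonoid.mem_closure_pair, hΓ]
    simp only [smul_eq_mul, Set.mem_setOf_eq]
    constructor
    · rintro ⟨a, b, rfl⟩; exact ⟨a, b, rfl⟩
    · rintro ⟨a, b, rfl⟩; exact ⟨a, b, rfl⟩
  have hfinΓc : (Γᶜ : Set ℕ).Finite := by
    have hf := frobeniusNumber_pair hpq (by omega) (by omega)
    apply Set.Finite.subset (Set.finite_Iic (p * q - p - q))
    intro x hx
    rw [hΓclos] at hx
    exact hf.2 hx
  -- Γn = n0 + U
  have hΓnU : Γn = (fun x => n0 + x) '' U := by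
    rw [hΓn, hU, Set.image_iUnion]
    apply Set.iUnion_congr
    intro i
    rw [← Set.image_comp]
    apply Set.image_congr'
    intro γ
    simp only [Function.comp_apply]
    have := hle i
    omega
  -- Γn ⊆ Γ
  have hΓnΓ : Γn ⊆ Γ := by
    rw [hΓn]
    rintro x hx
    simp only [Set.mem_iUnion, Set.mem_image] at hx
    obtain ⟨i, γ, hγ, rfl⟩ := hx
    exact hadd _ (hnΓ i) _ hγ
  -- Γ ⊆ everything eventually; Uᶜ ⊆ Γᶜ since Γ ⊆ U
  have hΓU : Γ ⊆ U := by
    intro x hx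
    rw [hU]
    apply Set.mem_iUnion.2 ⟨⟨0, hk⟩, _⟩
    exact ⟨x, hx, by simp [hn0]⟩
  have hfinUc : (Uᶜ : Set ℕ).Finite :=
    hfinΓc.subset (Set.compl_subset_compl.2 hΓU)
  -- Γnᶜ finite
  have hfinΓnc : (Γnᶜ : Set ℕ).Finite := by
    rw [hΓnU]
    have : ((fun x => n0 + x) '' U)ᶜ ⊆ Set.Iio n0 ∪ (fun x => n0 + x) '' Uᶜ := by
      intro x hx
      by_cases h : x < n0
      · exact Or.inl h
      · refine Or.inr ⟨x - n0, fun hmem => hx ⟨x - n0, hmem, show n0 + (x - n0) = x by omega⟩, show n0 + (x - n0) = x by omega⟩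
    exact ((Set.finite_Iio n0).union (hfinUc.image _)).subset this
  have hfindiff : (Γ \ Γn).Finite := hfinΓnc.subset fun x hx => hx.2
  -- Counting identity 1: Γnᶜ = (Γ \ Γn) ∪ Γᶜ, disjoint
  have hsplit : (Γnᶜ : Set ℕ) = (Γ \ Γn) ∪ Γᶜ := by
    ext x
    simp only [Set.mem_compl_iff, Set.mem_union, Set.mem_diff]
    constructor
    · intro hx
      by_cases h : x ∈ Γ
      · exact Or.inl ⟨h, hx⟩
      · exact Or.inr h
    · rintro (⟨_, h⟩ | h)
      · exact h
      · exact fun hx => h (hΓnΓ hx)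
  have hdisj : Disjoint (Γ \ Γn) (Γᶜ : Set ℕ) :=
    Set.disjoint_left.2 fun x hx hx' => hx' hx.1
  have hcount1 : (Γnᶜ : Set ℕ).ncard = (Γ \ Γn).ncard + δ := by
    rw [hsplit, Set.ncard_union_eq hdisj hfindiff hfinΓc, hδ]
  -- Counting identity 2: Γnᶜ has n0 + |Uᶜ| elements
  have himg : ((fun x => n0 + x) '' U)ᶜ = Set.Iio n0 ∪ (fun x => n0 + x) '' Uᶜ := by
    ext x
    simp only [Set.mem_compl_iff, Set.mem_union, Set.mem_Iio, Set.mem_image]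
    constructor
    · intro hx
      by_cases h : x < n0
      · exact Or.inl h
      · exact Or.inr ⟨x - n0, fun hmem => hx ⟨x - n0, hmem, show n0 + (x - n0) = x by omega⟩, show n0 + (x - n0) = x by omega⟩
    · rintro (h | ⟨y, hy, rfl⟩) ⟨z, hz, hzx⟩
      · omega
      · have hzy : z = y := by omega
        exact hy (hzy ▸ hz)
  have hdisj2 : Disjoint (Set.Iio n0) ((fun x => n0 + x) '' Uᶜ) := by
    rw [Set.disjoint_left]
    rintro x hx ⟨y, _, rfl⟩
    simp only [Set.mem_Iio] at hx
    omega
  have hcount2 : (Γnᶜ : Set ℕ).ncard = n0 + (Uᶜ : Set ℕ).ncard := by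
    rw [hΓnU, himg, Set.ncard_union_eq hdisj2 (Set.finite_Iio n0) (hfinUc.image _),
      Set.ncard_image_of_injective _ (add_right_injective n0)]
    congr 1
    rw [← Finset.coe_Iio, Set.ncard_coe_finset, Nat.card_Iio]
  have key : (Γ \ Γn).ncard + δ = n0 + (Uᶜ : Set ℕ).ncard := hcount1 ▸ hcount2
  omega
end

section
/- Let f = x^2 − y^3 and n ≥ 6. Then there exists an arc γ = (γ_1, γ_2) ∈ (K[[t]])^2 with γ_i(0) = 0 such that val_t(γ_1^2 − γ_2^3) = n. Moreover such arcs exist for every n ∈ {2,3,4,6,7,8,…} = the set of orders kN_i and mixed sums from the resolution data (2,1),(3,2),(6,4). -/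
open PowerSeries

lemma valt_eq {K : Type*} [Semiring K] (f : PowerSeries K) (n : ℕ)
    (h0 : PowerSeries.coeff n f ≠ 0)
    (h : ∀ m < n, PowerSeries.coeff m f = 0) : valt f = n := by
  refine le_antisymm (Nat.sInf_le h0) (le_csInf ⟨n, h0⟩ ?_)
  intro m hm
  by_contra hlt
  exact hm (h m (lt_of_not_ge hlt))

lemma Xpow_ne_zero {K : Type*} [Semiring K] [Nontrivial K] (k : ℕ) :
    (PowerSeries.X : PowerSeries K) ^ k ≠ 0 := by
  intro h
  have := PowerSeries.coeff_X_pow (R := K) k k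
  rw [h, if_pos rfl, map_zero] at this
  exact zero_ne_one this

lemma valt_Xpow {K : Type*} [Semiring K] [Nontrivial K] (k : ℕ) :
    valt ((PowerSeries.X : PowerSeries K) ^ k) = k := by
  refine valt_eq _ k ?_ ?_
  · rw [PowerSeries.coeff_X_pow, if_pos rfl]; exact one_ne_zero
  · intro m hm
    rw [PowerSeries.coeff_X_pow, if_neg (by omega)]

lemma cusp_id {K : Type*} [CommRing K] (a : ℕ) :
    ((PowerSeries.X : PowerSeries K) ^ 3 + PowerSeries.X ^ a) ^ 2
      - ((PowerSeries.X : PowerSeries K) ^ 2) ^ 3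
    = PowerSeries.X ^ (3 + a) + PowerSeries.X ^ (3 + a) + PowerSeries.X ^ (a + a) := by
  rw [pow_add, pow_add]; ring

/-- Nonemptiness of contact loci of the cusp `x² − y³`: for every
`n ∈ {2,3,4} ∪ {n : n ≥ 6}` there exists an arc `(γ₁, γ₂)` with `γ_i(0) = 0` and
`val_t(γ₁² − γ₂³) = n`. -/
theorem stmt15 {K : Type*} [Field K] [CharZero K] (n : ℕ)
    (hn : 6 ≤ n ∨ n = 2 ∨ n = 3 ∨ n = 4) :
    ∃ γ₁ γ₂ : PowerSeries K,
      PowerSeries.coeff 0 γ₁ = 0 ∧ PowerSeries.coeff 0 γ₂ = 0 ∧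
      γ₁ ^ 2 - γ₂ ^ 3 ≠ 0 ∧ valt (γ₁ ^ 2 - γ₂ ^ 3) = n := by
  classical
  rcases hn with hn | rfl | rfl | rfl
  · -- n ≥ 6 : γ₁ = X^3 + X^(n-3), γ₂ = X^2
    set a := n - 3 with ha
    have han : 3 + a = n := by omega
    have key : ∀ m : ℕ,
        PowerSeries.coeff m ((PowerSeries.X ^ 3 + PowerSeries.X ^ a) ^ 2
          - ((PowerSeries.X : PowerSeries K) ^ 2) ^ 3)
        = ((if m = n then 1 else 0) + (if m = n then 1 else 0))
          + (if m = a + a then 1 else 0) := by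
      intro m
      rw [cusp_id, map_add, map_add]
      simp only [PowerSeries.coeff_X_pow, han]
    have hcn : PowerSeries.coeff n ((PowerSeries.X ^ 3 + PowerSeries.X ^ a) ^ 2
        - ((PowerSeries.X : PowerSeries K) ^ 2) ^ 3) ≠ 0 := by
      rw [key n, if_pos rfl]
      by_cases hna : n = a + a
      · rw [if_pos hna]; norm_num
      · rw [if_neg hna]; norm_num
    refine ⟨PowerSeries.X ^ 3 + PowerSeries.X ^ a, PowerSeries.X ^ 2, ?_, ?_, ?_, ?_⟩
    · simp [PowerSeries.coeff_X_pow]; omega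
    · simp [PowerSeries.coeff_X_pow]
    · intro hzero
      rw [hzero, map_zero] at hcn
      exact hcn rfl
    · refine valt_eq _ n hcn ?_
      intro m hm
      have h1 : m ≠ n := by omega
      have h2 : m ≠ a + a := by omega
      rw [key m, if_neg h1, if_neg h2]
      norm_num
  · -- n = 2 : γ₁ = X, γ₂ = 0
    refine ⟨PowerSeries.X, 0, by simp, by simp, ?_, ?_⟩
    · rw [zero_pow (by norm_num), sub_zero, ← pow_one (PowerSeries.X : PowerSeries K),
        ← pow_mul]
      exact Xpow_ne_zero 2
    · rw [zero_pow (by norm_num), sub_zero, ← pow_one (PowerSeries.X : PowerSeries K),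
        ← pow_mul]
      exact valt_Xpow 2
  · -- n = 3 : γ₁ = 0, γ₂ = X
    refine ⟨0, PowerSeries.X, by simp, by simp, ?_, ?_⟩
    · rw [zero_pow (by norm_num), zero_sub, neg_ne_zero]
      exact Xpow_ne_zero 3
    · rw [zero_pow (by norm_num), zero_sub]
      refine valt_eq _ 3 ?_ ?_
      · rw [map_neg, PowerSeries.coeff_X_pow, if_pos rfl]
        simp
      · intro m hm
        rw [map_neg, PowerSeries.coeff_X_pow, if_neg (by omega), neg_zero]
  · -- n = 4 : γ₁ = X^2, γ₂ = 0
    refine ⟨PowerSeries.X ^ 2, 0, ?_, by simp, ?_, ?_⟩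
    · simp [PowerSeries.coeff_X_pow]
    · rw [zero_pow (by norm_num), sub_zero, ← pow_mul]
      exact Xpow_ne_zero 4
    · rw [zero_pow (by norm_num), sub_zero, ← pow_mul]
      exact valt_Xpow 4
end
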